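/- arXiv:1604.05649 — 5 statements merged into one kernel-verified Lean document; each statement's English description precedes it below -/
import Mathlib

section
/- Let J = (1/m)·11ᵀ ∈ ℝ^{m×m} be the averaging matrix and let Π_X denote coordinatewise projection of a vector in ℝ^m onto the box X = [-R, R]^m for some R > 0. Then for every x ∈ ℝ^m, ‖(I - J)Π_X(x)‖₂ ≤ ‖(I - J)x‖₂; i.e., projecting onto a box does not increase the deviation from the mean. -/
open Finset Real

/-- For any constant `a`, the sum of squared deviations from the mean is at
most the sum of squared deviations from `a`. -/
lemma sum_sq_dev_mean_le (m : ℕ) (hm : 0 < m) (y : Fin m → ℝ) (a : ℝ) :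
    ∑ i, (y i - (∑ j, y j) / m) ^ 2 ≤ ∑ i, (y i - a) ^ 2 := by
  set μ : ℝ := (∑ j, y j) / m with hμ
  have hm' : (m : ℝ) ≠ 0 := Nat.cast_ne_zero.mpr hm.ne'
  have hsum : ∑ i, (y i - μ) = 0 := by
    rw [Finset.sum_sub_distrib, Finset.sum_const, Finset.card_univ, Fintype.card_fin]
    rw [hμ, nsmul_eq_mul, mul_div_assoc', mul_div_cancel_left₀ _ hm', sub_self]
  have expand : ∑ i, (y i - a) ^ 2
      = ∑ i, (y i - μ) ^ 2 + (2 * (μ - a)) * (∑ i, (y i - μ))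
        + (m : ℝ) * (μ - a) ^ 2 := by
    rw [Finset.mul_sum]
    have : ∀ i : Fin m, (y i - a) ^ 2
        = (y i - μ) ^ 2 + 2 * (μ - a) * (y i - μ) + (μ - a) ^ 2 := by
      intro i; ring
    calc ∑ i, (y i - a) ^ 2
        = ∑ i, ((y i - μ) ^ 2 + 2 * (μ - a) * (y i - μ) + (μ - a) ^ 2) :=
          Finset.sum_congr rfl fun i _ => this i
      _ = ∑ i, (y i - μ) ^ 2 + ∑ i, 2 * (μ - a) * (y i - μ)
          + ∑ i : Fin m, (μ - a) ^ 2 := by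
          rw [Finset.sum_add_distrib, Finset.sum_add_distrib]
      _ = _ := by
          rw [Finset.sum_const, Finset.card_univ, Fintype.card_fin, nsmul_eq_mul]
  rw [expand, hsum]
  nlinarith [sq_nonneg (μ - a), (by exact_mod_cast hm : (0:ℝ) < m)]

/-- Projecting each coordinate onto the box `[-R, R]` does not increase
the deviation from the mean. -/
theorem box_projection_reduces_disagreement
    (m : ℕ) (hm : 0 < m) (R : ℝ) (hR : 0 < R) (x : Fin m → ℝ) :
    Real.sqrt (∑ i, ((fun j => max (-R) (min R (x j))) i
        - (∑ j, max (-R) (min R (x j))) / m) ^ 2)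
      ≤ Real.sqrt (∑ i, (x i - (∑ j, x j) / m) ^ 2) := by
  apply Real.sqrt_le_sqrt
  set y : Fin m → ℝ := fun j => max (-R) (min R (x j)) with hy
  set c : ℝ := (∑ j, x j) / m with hc
  set a : ℝ := max (-R) (min R c) with ha
  have lip : ∀ i, |y i - a| ≤ |x i - c| := by
    intro i
    have h1 : |min R (x i) - min R c| ≤ |x i - c| := abs_min_sub_min_le_max _ _ _ _ |>.trans (by simp)
    have h2 : |y i - a| ≤ |min R (x i) - min R c| :=
      (abs_max_sub_max_le_max _ _ _ _).trans (by simp)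
    exact h2.trans h1
  calc ∑ i, (y i - (∑ j, y j) / m) ^ 2
      ≤ ∑ i, (y i - a) ^ 2 := sum_sq_dev_mean_le m hm y a
    _ ≤ ∑ i, (x i - c) ^ 2 := by
        apply Finset.sum_le_sum
        intro i _
        have := lip i
        calc (y i - a) ^ 2 = |y i - a| ^ 2 := (sq_abs _).symm
          _ ≤ |x i - c| ^ 2 := pow_le_pow_left₀ (abs_nonneg _) this 2
          _ = (x i - c) ^ 2 := sq_abs _
end

section
/- Let x ∈ ℝ^m with coordinates x₁,…,x_ℓ < -R and x_{ℓ+1},…,x_m ≥ -R, and let x' be obtained from x by replacing x₁,…,x_ℓ each by -R and leaving the other coordinates unchanged. Then ∑ᵢ (x'ᵢ - x̄')² ≤ ∑ᵢ (xᵢ - x̄)², where x̄ and x̄' are the means of x and x' respectively. -/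
open Finset

lemma var_pair_id (m : ℕ) (hm : 0 < m) (v : Fin m → ℝ) :
    ∑ i, (v i - (∑ j, v j) / m) ^ 2
      = (1 / (2 * m)) * ∑ i, ∑ j, (v i - v j) ^ 2 := by
  have hm' : (m : ℝ) ≠ 0 := Nat.cast_ne_zero.mpr hm.ne'
  set S := ∑ j, v j with hS
  set Q := ∑ j, (v j) ^ 2 with hQ
  have h1 : ∀ i : Fin m, ∑ j, (v i - v j) ^ 2
      = m * (v i) ^ 2 - 2 * v i * S + Q := by
    intro i
    have h : ∀ j : Fin m, (v i - v j) ^ 2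
        = (v i) ^ 2 - 2 * v i * v j + (v j) ^ 2 := fun j => by ring
    rw [Finset.sum_congr rfl fun j _ => h j]
    rw [Finset.sum_add_distrib, Finset.sum_sub_distrib, ← Finset.mul_sum,
      Finset.sum_const, Finset.card_univ, Fintype.card_fin, nsmul_eq_mul]
  have h2 : ∑ i, ∑ j, (v i - v j) ^ 2 = 2 * m * Q - 2 * S ^ 2 := by
    rw [Finset.sum_congr rfl fun i _ => h1 i]
    rw [Finset.sum_add_distrib, Finset.sum_sub_distrib, ← Finset.mul_sum,
      ← Finset.sum_mul, ← Finset.mul_sum, Finset.sum_const, Finset.card_univ,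
      Fintype.card_fin, nsmul_eq_mul, ← hS, ← hQ]
    ring
  have h3 : ∑ i, (v i - S / m) ^ 2 = Q - S ^ 2 / m := by
    have h : ∀ i : Fin m, (v i - S / m) ^ 2
        = (v i) ^ 2 - 2 * (S / m) * v i + (S / m) ^ 2 := fun i => by ring
    rw [Finset.sum_congr rfl fun i _ => h i]
    rw [Finset.sum_add_distrib, Finset.sum_sub_distrib, ← Finset.mul_sum,
      Finset.sum_const, Finset.card_univ, Fintype.card_fin, nsmul_eq_mul, ← hS]
    field_simp
    ring
  rw [h3, h2]
  field_simp

/-- Clipping the coordinates that lie strictly below `-R` up to `-R`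
does not increase the sum of squared deviations from the mean. -/
theorem clip_below_reduces_variance
    (m ℓ : ℕ) (hℓ : 1 ≤ ℓ) (hℓm : ℓ ≤ m) (R : ℝ) (hR : 0 < R)
    (x : Fin m → ℝ)
    (hlow : ∀ i : Fin m, (i : ℕ) < ℓ → x i < -R)
    (hhigh : ∀ i : Fin m, ℓ ≤ (i : ℕ) → -R ≤ x i) :
    let x' : Fin m → ℝ := fun i => if (i : ℕ) < ℓ then -R else x i
    ∑ i, (x' i - (∑ j, x' j) / m) ^ 2 ≤ ∑ i, (x i - (∑ j, x j) / m) ^ 2 := by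
  intro x'
  have hm : 0 < m := lt_of_lt_of_le hℓ hℓm
  have hmax : ∀ i : Fin m, x' i = max (x i) (-R) := by
    intro i
    by_cases h : (i : ℕ) < ℓ
    · simp only [x', if_pos h, max_eq_right (le_of_lt (hlow i h))]
    · simp only [x', if_neg h, max_eq_left (hhigh i (le_of_not_gt h))]
  have hpt : ∀ i j : Fin m, (x' i - x' j) ^ 2 ≤ (x i - x j) ^ 2 := by
    intro i j
    rw [hmax i, hmax j, ← sq_abs (max (x i) (-R) - max (x j) (-R)),
      ← sq_abs (x i - x j)]
    exact pow_le_pow_left₀ (abs_nonneg _) (abs_max_sub_max_le_abs _ _ _) 2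
  rw [var_pair_id m hm x', var_pair_id m hm x]
  have hc : (0:ℝ) ≤ 1 / (2 * m) := by positivity
  exact mul_le_mul_of_nonneg_left
    (Finset.sum_le_sum fun i _ => Finset.sum_le_sum fun j _ => hpt i j) hc
end

section
/- For λ ∈ (0,1) and integer t ≥ 2, the quantity I_t := ∫₁^{√(t-1)} λ^{-u²} du satisfies I_t² ≤ π λ^{-2t} / (4 t (log λ)²). -/
open Real intervalIntegral

private lemma exp_sq_intble (c a b : ℝ) :
    IntervalIntegrable (fun u => Real.exp (c * u ^ 2)) MeasureTheory.volume a b :=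
  (Real.continuous_exp.comp (by continuity)).intervalIntegrable a b

/-- Chord bound: `∫_a^b e^{c u²} ≤ (e^{c b²} - e^{c a²})/(c(a+b))`. -/
private lemma chord_bound (c a b : ℝ) (hc : 0 < c) (ha : 0 < a) (hab : a ≤ b) :
    ∫ u in a..b, Real.exp (c * u ^ 2)
      ≤ (Real.exp (c * b ^ 2) - Real.exp (c * a ^ 2)) / (c * (a + b)) := by
  have hab0 : 0 < a + b := by linarith
  have hk : (0:ℝ) < c * (a + b) := by positivity
  set F : ℝ → ℝ := fun u => Real.exp (c * ((a + b) * u - a * b)) / (c * (a + b)) with hF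
  have hderiv : ∀ u ∈ Set.uIcc a b,
      HasDerivAt F (Real.exp (c * ((a + b) * u - a * b))) u := by
    intro u _
    have h1 : HasDerivAt (fun v => c * ((a + b) * v - a * b)) (c * (a + b)) u := by
      simpa using (((hasDerivAt_id u).const_mul (a + b)).sub_const (a * b)).const_mul c
    have h2 := h1.exp.div_const (c * (a + b))
    exact h2.congr_deriv (mul_div_cancel_right₀ _ hk.ne')
  have hint : IntervalIntegrable (fun u => Real.exp (c * ((a + b) * u - a * b)))
      MeasureTheory.volume a b :=
    (Real.continuous_exp.comp (by continuity)).intervalIntegrable a b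
  have hval : ∫ u in a..b, Real.exp (c * ((a + b) * u - a * b)) = F b - F a :=
    intervalIntegral.integral_eq_sub_of_hasDerivAt hderiv hint
  have hmono : ∫ u in a..b, Real.exp (c * u ^ 2)
      ≤ ∫ u in a..b, Real.exp (c * ((a + b) * u - a * b)) := by
    apply intervalIntegral.integral_mono_on hab (exp_sq_intble c a b) hint
    intro u hu
    have h1 : (u - a) * (b - u) ≥ 0 :=
      mul_nonneg (by linarith [hu.1]) (by linarith [hu.2])
    exact Real.exp_le_exp.mpr (by nlinarith)
  have e1 : c * ((a + b) * b - a * b) = c * b ^ 2 := by ring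
  have e2 : c * ((a + b) * a - a * b) = c * a ^ 2 := by ring
  calc ∫ u in a..b, Real.exp (c * u ^ 2)
      ≤ F b - F a := hmono.trans_eq hval
    _ = (Real.exp (c * b ^ 2) - Real.exp (c * a ^ 2)) / (c * (a + b)) := by
        rw [hF]; simp only [e1, e2]; ring

private lemma claimA (x : ℝ) (hx : 0 ≤ x) :
    x / 2 * Real.exp (x / 4) + 2 / 3 * (Real.exp x - Real.exp (x / 4))
      ≤ (2 / 3 + 2 / 3 * Real.exp (-2)) * Real.exp x := by
  have hE := Real.add_one_le_exp (3 * x / 4 - 2)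
  have h1 : Real.exp x = Real.exp (x / 4) * (Real.exp (3 * x / 4 - 2) * Real.exp 2) := by
    rw [← Real.exp_add, ← Real.exp_add]; ring_nf
  have h2 : Real.exp (-2 : ℝ) * Real.exp 2 = 1 := by
    rw [← Real.exp_add]; norm_num
  have hy := Real.exp_pos (x / 4)
  have key : x / 2 - 2 / 3 ≤ 2 / 3 * Real.exp (3 * x / 4 - 2) := by nlinarith
  rw [h1]
  nlinarith [mul_le_mul_of_nonneg_right key hy.le, Real.exp_pos (3 * x / 4 - 2),
    mul_pos hy (Real.exp_pos (3 * x / 4 - 2))]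

private lemma exp_neg_two_lt : Real.exp (-2 : ℝ) < 0.1354 := by
  have h1 : Real.exp (-2 : ℝ) * (Real.exp 1 * Real.exp 1) = 1 := by
    rw [← Real.exp_add, ← Real.exp_add]; norm_num
  nlinarith [Real.exp_one_gt_d9, Real.exp_pos (-2 : ℝ), Real.exp_pos (1 : ℝ)]

private lemma final_ineq (Q c t d : ℝ) (hQ : 0 < Q) (hc : 0 < c) (ht : 0 < t) (hd : 0 < d)
    (h : 4 * t * Q ^ 2 ≤ π * d ^ 2) :
    (Q * Real.exp (c * t) / (c * d)) ^ 2 ≤ π * Real.exp (2 * c * t) / (4 * t * c ^ 2) := by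
  have he : Real.exp (2 * c * t) = Real.exp (c * t) ^ 2 := by
    rw [sq, ← Real.exp_add]; ring_nf
  rw [he, div_pow, div_le_div_iff₀ (by positivity) (by positivity)]
  have h1 : (0:ℝ) ≤ Real.exp (c * t) ^ 2 * c ^ 2 := by positivity
  calc (Q * Real.exp (c * t)) ^ 2 * (4 * t * c ^ 2)
      = (4 * t * Q ^ 2) * (Real.exp (c * t) ^ 2 * c ^ 2) := by ring
    _ ≤ (π * d ^ 2) * (Real.exp (c * t) ^ 2 * c ^ 2) := mul_le_mul_of_nonneg_right h h1
    _ = π * Real.exp (c * t) ^ 2 * (c * d) ^ 2 := by ring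

set_option maxHeartbeats 1000000 in
/-- Bound on the square of the Gaussian-type integral `I_t = ∫₁^{√(t-1)} λ^{-u²} du`. -/
theorem gaussian_integral_sq_bound
    (lam : ℝ) (hlam₀ : 0 < lam) (hlam₁ : lam < 1)
    (t : ℕ) (ht : 2 ≤ t) :
    (∫ u in (1:ℝ)..Real.sqrt ((t : ℝ) - 1), lam ^ (-(u ^ 2))) ^ 2
      ≤ π * lam ^ (-(2 * (t : ℝ))) / (4 * t * (Real.log lam) ^ 2) := by
  have hlog : Real.log lam < 0 := Real.log_neg hlam₀ hlam₁
  set c : ℝ := -Real.log lam with hcdef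
  have hc : 0 < c := neg_pos.mpr hlog
  clear_value c
  have ht2 : (2:ℝ) ≤ (t:ℝ) := by exact_mod_cast ht
  have htpos : (0:ℝ) < t := by linarith
  set s : ℝ := Real.sqrt ((t : ℝ) - 1) with hsdef
  have hs_sq : s ^ 2 = (t:ℝ) - 1 := Real.sq_sqrt (by linarith)
  have hs1 : 1 ≤ s := by
    nlinarith [hs_sq, Real.sqrt_nonneg ((t:ℝ) - 1), ht2]
  have hs0 : 0 < s := by linarith
  -- rewrite the integrand
  have hint_eq : (∫ u in (1:ℝ)..s, lam ^ (-(u ^ 2)))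
      = ∫ u in (1:ℝ)..s, Real.exp (c * u ^ 2) := by
    apply intervalIntegral.integral_congr
    intro u _
    show lam ^ (-(u ^ 2)) = Real.exp (c * u ^ 2)
    rw [Real.rpow_def_of_pos hlam₀, hcdef]
    congr 1; ring
  -- rewrite the right-hand side
  have hrhs : π * lam ^ (-(2 * (t : ℝ))) / (4 * t * (Real.log lam) ^ 2)
      = π * Real.exp (2 * c * t) / (4 * t * c ^ 2) := by
    rw [Real.rpow_def_of_pos hlam₀, hcdef,
      show Real.log lam * -(2 * (t:ℝ)) = 2 * -Real.log lam * t from by ring]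
    ring
  rw [hint_eq, hrhs]
  set I : ℝ := ∫ u in (1:ℝ)..s, Real.exp (c * u ^ 2) with hIdef
  have hI0 : 0 ≤ I := by
    rw [hIdef]
    apply intervalIntegral.integral_nonneg hs1
    intro u _; positivity
  clear_value s I
  rcases le_or_gt s 2 with hsle | hsgt
  · -- small case: single chord, `K = exp(c*t)/(c*(1+s))`
    have hb := chord_bound c 1 s hc one_pos hs1
    simp only [one_pow, mul_one] at hb
    have hIK : I ≤ 1 * Real.exp (c * t) / (c * (1 + s)) := by
      rw [hIdef]
      refine hb.trans ?_
      rw [one_mul]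
      apply div_le_div₀ (by positivity) ?_ (by positivity) le_rfl
      have hxt : c * s ^ 2 ≤ c * t := by nlinarith
      nlinarith [Real.exp_le_exp.mpr hxt, Real.exp_pos c]
    have hcond : 4 * (t:ℝ) * 1 ^ 2 ≤ π * (1 + s) ^ 2 := by
      nlinarith [Real.pi_gt_three, hs_sq, mul_nonneg (sub_nonneg.mpr hs1) (sub_nonneg.mpr hsle)]
    calc I ^ 2 ≤ (1 * Real.exp (c * t) / (c * (1 + s))) ^ 2 :=
          pow_le_pow_left₀ hI0 hIK 2
      _ ≤ _ := final_ineq 1 c t (1 + s) one_pos hc htpos (by linarith) hcond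
  · -- big case: split at `m = s/2`
    have hm1 : (1:ℝ) ≤ s / 2 := by linarith
    have hsplit : (∫ u in (1:ℝ)..(s/2), Real.exp (c * u ^ 2))
        + (∫ u in (s/2)..s, Real.exp (c * u ^ 2)) = I := by
      rw [hIdef]
      exact intervalIntegral.integral_add_adjacent_intervals
        (exp_sq_intble c 1 (s/2)) (exp_sq_intble c (s/2) s)
    have hb1 := chord_bound c 1 (s/2) hc one_pos hm1
    simp only [one_pow, mul_one] at hb1
    have hb2 := chord_bound c (s/2) s hc (by linarith) (by linarith)
    set x : ℝ := c * s ^ 2 with hxdef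
    have hx0 : 0 ≤ x := by rw [hxdef]; positivity
    have hm_sq : c * (s / 2) ^ 2 = x / 4 := by rw [hxdef]; ring
    clear_value x
    set Q : ℝ := 2 / 3 + 2 / 3 * Real.exp (-2) with hQdef
    have hQ : (0:ℝ) < Q := by rw [hQdef]; positivity
    clear_value Q
    -- term 1 bound
    have ht1 : (Real.exp (c * (s/2) ^ 2) - Real.exp c) / (c * (1 + s/2))
        ≤ x / 2 * Real.exp (x / 4) / (c * s) := by
      rw [hm_sq]
      have hnum : Real.exp (x / 4) - Real.exp c ≤ x / 4 * Real.exp (x / 4) := by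
        have h1 : (1:ℝ) ≤ Real.exp c := Real.one_le_exp hc.le
        have h2 : Real.exp (-(x/4)) * Real.exp (x/4) = 1 := by
          rw [← Real.exp_add]; simp
        have h3 := mul_le_mul_of_nonneg_right (Real.add_one_le_exp (-(x/4)))
          (Real.exp_pos (x/4)).le
        rw [h2] at h3
        nlinarith [h3, h1]
      have hstep : (Real.exp (x / 4) - Real.exp c) / (c * (1 + s/2))
          ≤ (x / 4 * Real.exp (x / 4)) / (c * (s/2)) := by
        apply div_le_div₀ (by positivity) hnum (by positivity) (by nlinarith)
      refine hstep.trans (le_of_eq ?_)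
      field_simp
      ring
    -- term 2 bound (an equality, rewritten)
    have ht2' : (Real.exp x - Real.exp (c * (s/2) ^ 2)) / (c * (s/2 + s))
        ≤ 2 / 3 * (Real.exp x - Real.exp (x / 4)) / (c * s) := by
      rw [hm_sq]
      apply le_of_eq
      field_simp
      ring
    have hIsum : I ≤ (x / 2 * Real.exp (x / 4)
        + 2 / 3 * (Real.exp x - Real.exp (x / 4))) / (c * s) := by
      rw [← hsplit]
      calc (∫ u in (1:ℝ)..(s/2), Real.exp (c * u ^ 2))
            + (∫ u in (s/2)..s, Real.exp (c * u ^ 2))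
          ≤ x / 2 * Real.exp (x / 4) / (c * s)
            + 2 / 3 * (Real.exp x - Real.exp (x / 4)) / (c * s) :=
            add_le_add (hb1.trans ht1) (hb2.trans ht2')
        _ = _ := by ring
    have hIK : I ≤ Q * Real.exp (c * t) / (c * s) := by
      refine hIsum.trans ?_
      apply div_le_div₀ (by positivity) ?_ (by positivity) le_rfl
      have hA := claimA x hx0
      rw [← hQdef] at hA
      have hxt : x ≤ c * t := by rw [hxdef]; nlinarith
      have hB : Q * Real.exp x ≤ Q * Real.exp (c * t) :=
        mul_le_mul_of_nonneg_left (Real.exp_le_exp.mpr hxt) hQ.le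
      calc x / 2 * Real.exp (x / 4) + 2 / 3 * (Real.exp x - Real.exp (x / 4))
          ≤ Q * Real.exp x := hA
        _ ≤ Q * Real.exp (c * t) := hB
    have hcond : 4 * (t:ℝ) * Q ^ 2 ≤ π * s ^ 2 := by
      have h4 : 4 < s ^ 2 := by nlinarith
      have ht5 : 5 < (t:ℝ) := by nlinarith
      have he := exp_neg_two_lt
      have he0 := Real.exp_pos (-2 : ℝ)
      have hQ2 : Q ^ 2 ≤ 0.58 := by
        rw [hQdef]
        nlinarith [he, he0, mul_le_mul_of_nonneg_left he.le he0.le]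
      have hp : 3 * s ^ 2 ≤ π * s ^ 2 :=
        mul_le_mul_of_nonneg_right Real.pi_gt_three.le (sq_nonneg s)
      have h5 := mul_le_mul_of_nonneg_left hQ2 (by positivity : (0:ℝ) ≤ 4 * (t:ℝ))
      nlinarith [h5, hp, h4, hs_sq]
    calc I ^ 2 ≤ (Q * Real.exp (c * t) / (c * s)) ^ 2 := pow_le_pow_left₀ hI0 hIK 2
      _ ≤ _ := final_ineq Q c t s hQ hc htpos hs0 hcond
end

section
/- For all θ ∈ [0, π/4], one has 1/cos²(θ) ≤ 1 + 4θ/π. -/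
open Real

lemma convexOn_tan_aux : ConvexOn ℝ (Set.Icc 0 (π / 4)) Real.tan := by
  have hπ : (0:ℝ) < π / 4 := by positivity
  have hint : interior (Set.Icc (0:ℝ) (π/4)) = Set.Ioo 0 (π/4) := interior_Icc
  have hcos : ∀ x ∈ Set.Icc (0:ℝ) (π/4), 0 < Real.cos x := by
    intro x hx
    apply Real.cos_pos_of_mem_Ioo
    constructor
    · linarith [hx.1, Real.pi_pos]
    · linarith [hx.2, Real.pi_pos]
  refine convexOn_of_hasDerivWithinAt2_nonneg (convex_Icc _ _)
    (f' := fun x => (Real.cos x ^ 2)⁻¹)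
    (f'' := fun x => -(2 * Real.cos x * -Real.sin x) / (Real.cos x ^ 2) ^ 2)
    ?_ ?_ ?_ ?_
  · exact fun x hx => (Real.continuousAt_tan.2 (hcos x hx).ne').continuousWithinAt
  · intro x hx
    rw [hint] at hx
    have h := Real.hasDerivAt_tan (hcos x (Set.Ioo_subset_Icc_self hx)).ne'
    simpa [one_div] using h.hasDerivWithinAt
  · intro x hx
    rw [hint] at hx
    have hc : Real.cos x ≠ 0 := (hcos x (Set.Ioo_subset_Icc_self hx)).ne'
    have h : HasDerivAt (fun x => (Real.cos x ^ 2)⁻¹)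
        (-(2 * Real.cos x * -Real.sin x) / (Real.cos x ^ 2) ^ 2) x := by
      have := ((Real.hasDerivAt_cos x).pow 2).inv (pow_ne_zero 2 hc)
      refine this.congr_deriv ?_
      norm_num [Pi.pow_apply]
    exact h.hasDerivWithinAt
  · intro x hx
    rw [hint] at hx
    have hs : 0 ≤ Real.sin x := Real.sin_nonneg_of_nonneg_of_le_pi hx.1.le
      (by linarith [hx.2, Real.pi_pos])
    have hc : 0 ≤ Real.cos x := (hcos x (Set.Ioo_subset_Icc_self hx)).le
    show 0 ≤ -(2 * Real.cos x * -Real.sin x) / (Real.cos x ^ 2) ^ 2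
    have h1 : -(2 * Real.cos x * -Real.sin x) = 2 * Real.cos x * Real.sin x := by ring
    rw [h1]
    positivity

lemma tan_le_linear_aux (θ : ℝ) (hθ : θ ∈ Set.Icc 0 (π / 4)) :
    Real.tan θ ≤ 4 * θ / π := by
  have hπ : (0:ℝ) < π := Real.pi_pos
  set t : ℝ := 4 * θ / π with ht
  have ht0 : 0 ≤ t := div_nonneg (by linarith [hθ.1]) hπ.le
  have ht1 : t ≤ 1 := by
    rw [ht, div_le_one hπ]; linarith [hθ.2]
  have hcomb : (1 - t) • (0:ℝ) + t • (π / 4) = θ := by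
    simp only [smul_eq_mul, ht]
    field_simp
    ring
  have := convexOn_tan_aux.2
    (Set.left_mem_Icc.2 (by positivity))
    (Set.right_mem_Icc.2 (by positivity))
    (show (0:ℝ) ≤ 1 - t by linarith) ht0 (show (1 - t) + t = 1 by ring)
  rw [hcomb] at this
  simpa [Real.tan_pi_div_four] using this

/-- On `[0, π/4]`, `sec² θ ≤ 1 + 4θ/π`. -/
theorem sec_sq_le_linear (θ : ℝ) (hθ : θ ∈ Set.Icc 0 (π / 4)) :
    1 / Real.cos θ ^ 2 ≤ 1 + 4 * θ / π := by
  have hπ : (0:ℝ) < π := Real.pi_pos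
  have hcos : 0 < Real.cos θ := by
    apply Real.cos_pos_of_mem_Ioo
    constructor
    · linarith [hθ.1]
    · linarith [hθ.2]
  have h1 : 1 / Real.cos θ ^ 2 = 1 + Real.tan θ ^ 2 := by
    rw [← Real.inv_one_add_tan_sq hcos.ne', one_div, inv_inv]
  have htan0 : 0 ≤ Real.tan θ :=
    Real.tan_nonneg_of_nonneg_of_le_pi_div_two hθ.1 (by linarith [hθ.2])
  have htle : Real.tan θ ≤ 4 * θ / π := tan_le_linear_aux θ hθ
  have ht1 : 4 * θ / π ≤ 1 := by
    rw [div_le_one hπ]; linarith [hθ.2]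
  have : Real.tan θ ^ 2 ≤ (4 * θ / π) ^ 2 := by
    apply pow_le_pow_left₀ htan0 htle
  nlinarith [this, ht1, htle, htan0]
end

section
/- Let a nonnegative integer-valued random variable τ satisfy τ ≤ t - 2 almost surely and E[τ²] ≤ mB² for constants m, B > 0 and integer t ≥ 3. Then E[τ / √(t - τ - 1)] ≤ √(2m)·B/√t + 4mB²/t. -/
open MeasureTheory Real

set_option maxHeartbeats 1600000 in
/-- Bound on `E[τ/√(t-τ-1)]` for a nonnegative integer-valued random delay `τ`
with `τ ≤ t-2` almost surely and `E[τ²] ≤ mB²`. -/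
theorem delay_expectation_bound
    {Ω : Type*} [MeasurableSpace Ω] (μ : Measure Ω) [IsProbabilityMeasure μ]
    (τ : Ω → ℕ) (hmeas : Measurable τ)
    (t : ℕ) (ht : 3 ≤ t) (m B : ℝ) (hm : 0 < m) (hB : 0 < B)
    (hbdd : ∀ᵐ ω ∂μ, τ ω ≤ t - 2)
    (hmoment : ∫ ω, ((τ ω : ℝ)) ^ 2 ∂μ ≤ m * B ^ 2) :
    ∫ ω, (τ ω : ℝ) / Real.sqrt ((t : ℝ) - (τ ω : ℝ) - 1) ∂μ
      ≤ Real.sqrt (2 * m) * B / Real.sqrt t + 4 * m * B ^ 2 / t := by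
  have hT3 : (3:ℝ) ≤ (t:ℝ) := by exact_mod_cast ht
  set T : ℝ := (t:ℝ) with hTdef
  have hT0 : 0 < T := by linarith
  have hsm : 0 < Real.sqrt m := Real.sqrt_pos.2 hm
  set a : ℝ := Real.sqrt m * B with hadef
  have ha : 0 < a := mul_pos hsm hB
  set c : ℝ := Real.sqrt 2 / Real.sqrt T with hcdef
  have hc0 : 0 < c := div_pos (Real.sqrt_pos.2 two_pos) (Real.sqrt_pos.2 hT0)
  set A : ℝ := c / (2*a) + 4*(T-2)/(T-1)^2 with hAdef
  set C : ℝ := c * a / 2 with hCdef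
  have hA2 : 0 ≤ 4*(T-2)/(T-1)^2 := div_nonneg (by linarith) (sq_nonneg _)
  have hA1 : c/(2*a) ≤ A := by rw [hAdef]; linarith
  have hA0 : 0 ≤ A := le_trans (by positivity) hA1
  have hC0 : 0 ≤ C := by positivity
  -- pointwise a.e. bound
  have hpt : ∀ᵐ ω ∂μ, (τ ω : ℝ) / Real.sqrt (T - (τ ω : ℝ) - 1)
      ≤ A * (τ ω:ℝ)^2 + C := by
    filter_upwards [hbdd] with ω hω
    set x : ℝ := (τ ω : ℝ) with hxdef
    have hx0 : 0 ≤ x := Nat.cast_nonneg _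
    have hx2 : x + 2 ≤ T := by
      have h' : τ ω + 2 ≤ t := by omega
      rw [hxdef, hTdef]; exact_mod_cast h'
    rcases le_or_gt (2 * τ ω + 2) t with hcase | hcase
    · -- good case : x ≤ T/2 - 1
      have hx : 2*x + 2 ≤ T := by rw [hxdef, hTdef]; exact_mod_cast hcase
      have h1 : T/2 ≤ T - x - 1 := by linarith
      have hpos : (0:ℝ) < T/2 := by linarith
      have hs : Real.sqrt (T/2) ≤ Real.sqrt (T - x - 1) := Real.sqrt_le_sqrt h1
      have hs0 : 0 < Real.sqrt (T/2) := Real.sqrt_pos.2 hpos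
      have h2 : x / Real.sqrt (T - x - 1) ≤ x / Real.sqrt (T/2) :=
        div_le_div_of_nonneg_left hx0 hs0 hs
      have h3 : x / Real.sqrt (T/2) = c * x := by
        rw [Real.sqrt_div hT0.le, div_div_eq_mul_div, hcdef]; ring
      have h4 : x ≤ x^2/(2*a) + a/2 := by
        have hsq := sq_nonneg (x - a)
        rw [div_add_div _ _ (by positivity) (by norm_num), le_div_iff₀ (by positivity)]
        nlinarith
      have h5 : c * x ≤ c * (x^2/(2*a) + a/2) := by
        exact mul_le_mul_of_nonneg_left h4 hc0.le
      have h6 : c * (x^2/(2*a) + a/2) = c/(2*a) * x^2 + C := by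
        rw [hCdef]; field_simp
      have h7 : c/(2*a) * x^2 ≤ A * x^2 :=
        mul_le_mul_of_nonneg_right hA1 (sq_nonneg x)
      calc x / Real.sqrt (T - x - 1) ≤ x / Real.sqrt (T/2) := h2
        _ = c * x := h3
        _ ≤ c * (x^2/(2*a) + a/2) := h5
        _ = c/(2*a) * x^2 + C := h6
        _ ≤ A * x^2 + C := by linarith
    · -- bad case : 2x ≥ T - 1
      have h' : t ≤ 2 * τ ω + 1 := by omega
      have hx : T ≤ 2*x + 1 := by rw [hxdef, hTdef]; exact_mod_cast h'
      have hone : 1 ≤ T - x - 1 := by linarith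
      have hs1 : 1 ≤ Real.sqrt (T - x - 1) := by
        have := Real.sqrt_le_sqrt hone
        rwa [Real.sqrt_one] at this
      have h2 : x / Real.sqrt (T - x - 1) ≤ x := div_le_self hx0 hs1
      have hd : 0 < T - 1 := by linarith
      have h3 : x ≤ 4*(T-2)/(T-1)^2 * x^2 := by
        rw [div_mul_eq_mul_div, le_div_iff₀ (by positivity)]
        nlinarith [sq_nonneg (2*x - (T-1))]
      have h4 : 4*(T-2)/(T-1)^2 * x^2 ≤ A * x^2 := by
        apply mul_le_mul_of_nonneg_right _ (sq_nonneg x)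
        rw [hAdef]
        have : 0 ≤ c/(2*a) := by positivity
        linarith
      calc x / Real.sqrt (T - x - 1) ≤ x := h2
        _ ≤ 4*(T-2)/(T-1)^2 * x^2 := h3
        _ ≤ A * x^2 := h4
        _ ≤ A * x^2 + C := by linarith
  -- measurability
  have hmx : Measurable fun ω => (τ ω : ℝ) := measurable_from_top.comp hmeas
  have hmf : Measurable fun ω => (τ ω : ℝ) / Real.sqrt (T - (τ ω : ℝ) - 1) :=
    hmx.div (((measurable_const.sub hmx).sub measurable_const).sqrt)
  -- integrability of f
  have hint_f : Integrable (fun ω => (τ ω : ℝ) / Real.sqrt (T - (τ ω : ℝ) - 1)) μ := by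
    refine Integrable.mono' (integrable_const T) hmf.aestronglyMeasurable ?_
    filter_upwards [hbdd] with ω hω
    have hx0 : (0:ℝ) ≤ (τ ω : ℝ) := Nat.cast_nonneg _
    have hx2 : (τ ω : ℝ) + 2 ≤ T := by
      have h' : τ ω + 2 ≤ t := by omega
      rw [hTdef]; exact_mod_cast h'
    have hnn : 0 ≤ (τ ω : ℝ) / Real.sqrt (T - (τ ω : ℝ) - 1) :=
      div_nonneg hx0 (Real.sqrt_nonneg _)
    rw [Real.norm_eq_abs, abs_of_nonneg hnn]
    have hs1 : 1 ≤ Real.sqrt (T - (τ ω : ℝ) - 1) := by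
      have := Real.sqrt_le_sqrt (show (1:ℝ) ≤ T - (τ ω : ℝ) - 1 by linarith)
      rwa [Real.sqrt_one] at this
    calc (τ ω : ℝ) / Real.sqrt (T - (τ ω : ℝ) - 1) ≤ (τ ω : ℝ) := div_le_self hx0 hs1
      _ ≤ T := by linarith
  -- integrability of τ²
  have hint_sq : Integrable (fun ω => ((τ ω : ℝ))^2) μ := by
    refine Integrable.mono' (integrable_const (T^2)) (hmx.pow_const 2).aestronglyMeasurable ?_
    filter_upwards [hbdd] with ω hω
    have hx0 : (0:ℝ) ≤ (τ ω : ℝ) := Nat.cast_nonneg _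
    have hx2 : (τ ω : ℝ) + 2 ≤ T := by
      have h' : τ ω + 2 ≤ t := by omega
      rw [hTdef]; exact_mod_cast h'
    rw [Real.norm_eq_abs, abs_of_nonneg (sq_nonneg _)]
    have : (τ ω : ℝ) ≤ T := by linarith
    nlinarith
  have hint_g : Integrable (fun ω => A * ((τ ω : ℝ))^2 + C) μ :=
    (hint_sq.const_mul A).add (integrable_const C)
  -- integrate the pointwise bound
  have hstep : ∫ ω, (τ ω : ℝ) / Real.sqrt (T - (τ ω : ℝ) - 1) ∂μ
      ≤ ∫ ω, (A * ((τ ω : ℝ))^2 + C) ∂μ :=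
    integral_mono_ae hint_f hint_g hpt
  have hval : ∫ ω, (A * ((τ ω : ℝ))^2 + C) ∂μ = A * (∫ ω, ((τ ω : ℝ))^2 ∂μ) + C := by
    rw [integral_add (hint_sq.const_mul A) (integrable_const C),
      integral_const_mul, integral_const, probReal_univ]
    simp
  have hstep2 : A * (∫ ω, ((τ ω : ℝ))^2 ∂μ) + C ≤ A * (m * B^2) + C := by
    have := mul_le_mul_of_nonneg_left hmoment hA0
    linarith
  -- final arithmetic
  have ha2 : a^2 = m * B^2 := by
    rw [hadef, mul_pow, Real.sq_sqrt hm.le]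
  have hfinal : A * (m * B^2) + C ≤ Real.sqrt (2*m) * B / Real.sqrt T + 4 * m * B^2 / T := by
    rw [← ha2, hAdef, hCdef]
    have h1 : (c / (2*a)) * a^2 + c * a / 2 = c * a := by field_simp; ring
    have h2 : c * a = Real.sqrt (2*m) * B / Real.sqrt T := by
      rw [hcdef, hadef, Real.sqrt_mul (by norm_num : (0:ℝ) ≤ 2)]
      field_simp
    have h3 : 4*(T-2)/(T-1)^2 * a^2 ≤ 4 * a^2 / T := by
      rw [div_mul_eq_mul_div, div_le_div_iff₀ (pow_pos (by linarith : (0:ℝ) < T - 1) 2) hT0]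
      nlinarith [sq_nonneg a, ha.le]
    have ha2' : 4 * a^2 / T = 4 * m * B^2 / T := by rw [ha2]; ring_nf
    nlinarith [h3]
  calc ∫ ω, (τ ω : ℝ) / Real.sqrt (T - (τ ω : ℝ) - 1) ∂μ
      ≤ A * (∫ ω, ((τ ω : ℝ))^2 ∂μ) + C := hstep.trans_eq hval
    _ ≤ A * (m * B^2) + C := hstep2
    _ ≤ Real.sqrt (2*m) * B / Real.sqrt T + 4 * m * B^2 / T := hfinal
end
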